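/- Let k > 0 and t₀ ∈ ℝ. Suppose φ : [t₀, ∞) → ℝ is differentiable with φ'(t) = −k·sin(φ(t)) for all t ≥ t₀ and φ(t₀) ∈ (−π, π). Then φ(t) → 0 as t → ∞. -/

import Mathlib

open Real Filter

lemma sin_two_arctan' (x : ℝ) : Real.sin (2 * Real.arctan x) = 2 * x / (1 + x ^ 2) := by
  have h : (0:ℝ) < 1 + x ^ 2 := by positivity
  have hs : Real.sqrt (1 + x ^ 2) * Real.sqrt (1 + x ^ 2) = 1 + x ^ 2 :=
    Real.mul_self_sqrt h.le
  rw [Real.sin_two_mul, Real.sin_arctan, Real.cos_arctan, mul_one_div, ← mul_div_assoc,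
    div_div, hs]

lemma u_hasDerivAt (k t₀ c : ℝ) (t : ℝ) :
    HasDerivAt (fun s => 2 * Real.arctan (c * Real.exp (-k * (s - t₀))))
      (-k * Real.sin (2 * Real.arctan (c * Real.exp (-k * (t - t₀))))) t := by
  have h1 : HasDerivAt (fun s : ℝ => -k * (s - t₀)) (-k) t := by
    simpa using ((hasDerivAt_id t).sub_const t₀).const_mul (-k)
  have h2 : HasDerivAt (fun s : ℝ => c * Real.exp (-k * (s - t₀)))
      (c * (Real.exp (-k * (t - t₀)) * -k)) t := (h1.exp).const_mul c
  have h3 := ((Real.hasDerivAt_arctan (c * Real.exp (-k * (t - t₀)))).comp t h2).const_mul 2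
  convert h3 using 1
  case e'_4 => rfl
  case e'_5 => rfl
  case e'_8 => rfl
  rw [sin_two_arctan']
  obtain ⟨x, hx⟩ : ∃ y, y = c * Real.exp (-k * (t - t₀)) := ⟨_, rfl⟩
  rw [← hx, show c * (Real.exp (-k * (t - t₀)) * -k) = x * -k from by rw [hx]; ring]
  have h : (0:ℝ) < 1 + x ^ 2 := by positivity
  field_simp [h.ne']

/-- Heading-error dynamics `φ' = -k sin φ`: the origin is almost globally
asymptotically stable; any solution starting in `(-π, π)` converges to `0`. -/
theorem heading_error_converges
    (k t₀ : ℝ) (hk : 0 < k) (φ : ℝ → ℝ)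
    (hderiv : ∀ t, t₀ ≤ t → HasDerivAt φ (-k * Real.sin (φ t)) t)
    (hinit : φ t₀ ∈ Set.Ioo (-Real.pi) Real.pi) :
    Tendsto φ atTop (nhds 0) := by
  set c : ℝ := Real.tan (φ t₀ / 2) with hc
  set u : ℝ → ℝ := fun s => 2 * Real.arctan (c * Real.exp (-k * (s - t₀))) with hu
  -- u(t₀) = φ(t₀)
  have hu0 : u t₀ = φ t₀ := by
    have h1 : -(π / 2) < φ t₀ / 2 := by linarith [hinit.1, Real.pi_pos]
    have h2 : φ t₀ / 2 < π / 2 := by linarith [hinit.2]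
    simp only [hu, sub_self, mul_zero, Real.exp_zero, mul_one, hc]
    rw [Real.arctan_tan h1 h2]
    ring
  -- Lipschitz
  have hlip : LipschitzWith ⟨k, hk.le⟩ (fun x : ℝ => -k * Real.sin x) := by
    apply LipschitzWith.of_dist_le_mul
    intro a b
    have hsin1 : LipschitzWith 1 Real.sin := by
      apply lipschitzWith_of_nnnorm_deriv_le Real.differentiable_sin
      intro x
      rw [Real.deriv_sin, ← NNReal.coe_le_coe, coe_nnnorm, Real.norm_eq_abs]
      simpa using Real.abs_cos_le_one x
    have hsin : dist (Real.sin a) (Real.sin b) ≤ dist a b := by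
      simpa using hsin1.dist_le_mul a b
    simp only [Real.dist_eq, ← mul_sub, abs_mul, abs_neg, abs_of_pos hk] at *
    exact mul_le_mul_of_nonneg_left hsin hk.le
  -- uniqueness
  have heq : ∀ t, t₀ ≤ t → φ t = u t := by
    intro t ht
    have := ODE_solution_unique (v := fun _ x => -k * Real.sin x) (K := ⟨k, hk.le⟩)
      (f := φ) (g := u) (a := t₀) (b := t) (fun _ => hlip)
      (fun s hs => (hderiv s hs.1).continuousAt.continuousWithinAt)
      (fun s hs => (hderiv s hs.1).hasDerivWithinAt)
      (fun s _ => (u_hasDerivAt k t₀ c s).continuousAt.continuousWithinAt)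
      (fun s _ => (u_hasDerivAt k t₀ c s).hasDerivWithinAt)
      hu0.symm
    exact this ⟨ht, le_rfl⟩
  -- u tends to 0
  have hlim : Tendsto u atTop (nhds 0) := by
    have h0 : Tendsto (fun s : ℝ => s - t₀) atTop atTop :=
      (tendsto_atTop_add_const_right atTop (-t₀) tendsto_id).congr
        (fun x => by simp [sub_eq_add_neg])
    have h1 : Tendsto (fun s : ℝ => -k * (s - t₀)) atTop atBot :=
      Tendsto.const_mul_atTop_of_neg (by linarith) h0
    have h2 : Tendsto (fun s : ℝ => Real.exp (-k * (s - t₀))) atTop (nhds 0) :=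
      Real.tendsto_exp_atBot.comp h1
    have h3 : Tendsto (fun s : ℝ => c * Real.exp (-k * (s - t₀))) atTop (nhds 0) := by
      simpa using h2.const_mul c
    have h4 := (Real.continuous_arctan.tendsto 0).comp h3
    simpa [Function.comp, hu] using h4.const_mul 2
  refine hlim.congr' ?_
  filter_upwards [eventually_ge_atTop t₀] with t ht using (heq t ht).symm
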